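/- For a uniformly random subset S of {0,1}^n, the variance of the number X_{n,r} of r-dimensional subcubes contained in S satisfies Var(X_{n,r}) ≥ c · n^{2r} · 2^n for some constant c > 0 depending only on r, for all sufficiently large n. -/

import Mathlib

open Finset

def cube {n : ℕ} (w : Fin n → Option Bool) : Finset (Fin n → Bool) :=
  Finset.univ.filter fun x => ∀ i, ∀ b, w i = some b → x i = b

def Word (n r : ℕ) : Finset (Fin n → Option Bool) :=
  Finset.univ.filter fun w => (Finset.univ.filter fun i => w i = none).card = r

/-- Expectation with respect to a uniformly random subset `S ⊆ {0,1}^n`. -/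
noncomputable def Ex (n : ℕ) (f : Finset (Fin n → Bool) → ℝ) : ℝ :=
  (∑ S : Finset (Fin n → Bool), f S) / (Fintype.card (Finset (Fin n → Bool)))

/-- The number of `r`-dimensional subcubes contained in `S`. -/
def Xr (n r : ℕ) (S : Finset (Fin n → Bool)) : ℕ :=
  ((Word n r).filter fun w => cube w ⊆ S).card

/-! ### Auxiliary lemmas -/

lemma card_supersets {β : Type*} [Fintype β] [DecidableEq β] (A : Finset β) :
    (univ.filter fun S : Finset β => A ⊆ S).card = 2 ^ (Fintype.card β - A.card) := by
  rw [← Finset.card_compl A, ← Finset.card_powerset]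
  apply Finset.card_bij (fun S _ => S \ A)
  · intro S hS
    simp only [mem_powerset]
    intro x hx
    simp only [mem_sdiff] at hx
    simp [hx.2]
  · intro S hS T hT h
    simp only [mem_filter] at hS hT
    have : S \ A ∪ A = T \ A ∪ A := by rw [h]
    rwa [Finset.sdiff_union_of_subset hS.2, Finset.sdiff_union_of_subset hT.2] at this
  · intro T hT
    simp only [mem_powerset] at hT
    refine ⟨T ∪ A, ?_, ?_⟩
    · simp
    · rw [Finset.union_sdiff_right, Finset.sdiff_eq_self_iff_disjoint]
      rw [Finset.disjoint_left]
      intro x hxT hxA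
      have := hT hxT
      simp at this
      exact absurd hxA this

lemma cube_eq_piFinset {n : ℕ} (w : Fin n → Option Bool) :
    cube w = Fintype.piFinset (fun i => (w i).elim Finset.univ (fun b => {b})) := by
  ext x
  simp only [cube, mem_filter, mem_univ, true_and, Fintype.mem_piFinset]
  constructor
  · intro h i
    cases hw : w i with
    | none => simp [hw]
    | some b => simp [hw, h i b hw]
  · intro h i b hb
    have := h i
    rw [hb] at this
    simpa using this

lemma card_cube {n r : ℕ} {w : Fin n → Option Bool} (hw : w ∈ Word n r) :
    (cube w).card = 2 ^ r := by
  rw [cube_eq_piFinset, Fintype.card_piFinset]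
  simp only [Word, mem_filter] at hw
  rw [← hw.2]
  rw [← Finset.prod_filter_mul_prod_filter_not univ (fun i => w i = none)]
  have h1 : ∀ i ∈ univ.filter (fun i => w i = none),
      ((w i).elim Finset.univ (fun b => ({b} : Finset Bool))).card = 2 := by
    intro i hi; simp only [mem_filter] at hi; rw [hi.2]; simp
  have h2 : ∀ i ∈ univ.filter (fun i => ¬ w i = none),
      ((w i).elim Finset.univ (fun b => ({b} : Finset Bool))).card = 1 := by
    intro i hi; simp only [mem_filter] at hi
    cases hw : w i with
    | none => exact absurd hw hi.2
    | some b => simp [hw]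
  rw [Finset.prod_congr rfl h1, Finset.prod_congr rfl h2]
  simp

section ExLemmas
variable (n : ℕ)

lemma Ex_add (f g : Finset (Fin n → Bool) → ℝ) :
    Ex n (fun S => f S + g S) = Ex n f + Ex n g := by
  unfold Ex; rw [Finset.sum_add_distrib]; ring

lemma Ex_sub (f g : Finset (Fin n → Bool) → ℝ) :
    Ex n (fun S => f S - g S) = Ex n f - Ex n g := by
  unfold Ex; rw [Finset.sum_sub_distrib]; ring

lemma Ex_mul_const (f : Finset (Fin n → Bool) → ℝ) (c : ℝ) :
    Ex n (fun S => f S * c) = Ex n f * c := by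
  unfold Ex; rw [← Finset.sum_mul]; ring

lemma Ex_const (c : ℝ) : Ex n (fun _ => c) = c := by
  unfold Ex
  rw [Finset.sum_const, Finset.card_univ, nsmul_eq_mul]
  have : (0:ℝ) < (Fintype.card (Finset (Fin n → Bool)) : ℝ) :=
    Nat.cast_pos.mpr Fintype.card_pos
  field_simp

lemma Ex_sum {ι : Type*} (t : Finset ι) (F : ι → Finset (Fin n → Bool) → ℝ) :
    Ex n (fun S => ∑ i ∈ t, F i S) = ∑ i ∈ t, Ex n (F i) := by
  unfold Ex
  rw [Finset.sum_comm, Finset.sum_div]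

lemma var_eq (f : Finset (Fin n → Bool) → ℝ) :
    Ex n (fun S => (f S - Ex n f)^2) = Ex n (fun S => f S ^ 2) - (Ex n f)^2 := by
  have h1 : ∀ S, (f S - Ex n f)^2 = (f S^2 - f S * (2 * Ex n f)) + Ex n f ^ 2 := by
    intro S; ring
  calc Ex n (fun S => (f S - Ex n f)^2)
      = Ex n (fun S => (f S^2 - f S * (2 * Ex n f)) + Ex n f ^ 2) := by simp_rw [h1]
    _ = (Ex n (fun S => f S^2) - Ex n f * (2 * Ex n f)) + Ex n f ^ 2 := by
        rw [Ex_add, Ex_sub, Ex_mul_const, Ex_const]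
    _ = Ex n (fun S => f S ^ 2) - (Ex n f)^2 := by ring

lemma Ex_ind (A : Finset (Fin n → Bool)) (hA : A.card ≤ 2^n) :
    Ex n (fun S => if A ⊆ S then (1:ℝ) else 0) = 1 / 2 ^ A.card := by
  unfold Ex
  rw [Finset.sum_boole, card_supersets, Fintype.card_finset]
  have hcard : Fintype.card (Fin n → Bool) = 2 ^ n := by simp
  rw [hcard]
  push_cast
  rw [div_eq_div_iff (by positivity) (by positivity), one_mul, ← pow_add,
    Nat.sub_add_cancel hA]

end ExLemmas

lemma degree (n r : ℕ) (x : Fin n → Bool) :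
    ((Word n r).filter fun w => x ∈ cube w).card = n.choose r := by
  have : n.choose r = ((univ : Finset (Fin n)).powersetCard r).card := by
    rw [Finset.card_powersetCard, card_univ, Fintype.card_fin]
  rw [this]
  symm
  apply Finset.card_bij
    (fun K _ => (fun i => if i ∈ K then none else some (x i) : Fin n → Option Bool))
  · intro K hK
    simp only [Finset.mem_powersetCard_univ] at hK
    simp only [mem_filter, Word, mem_univ, true_and, cube]
    refine ⟨?_, ?_⟩
    · rw [← hK]
      congr 1
      ext i
      by_cases h : i ∈ K <;> simp [h]
    · intro i b hb
      by_cases h : i ∈ K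
      · simp [h] at hb
      · simp [h] at hb; exact hb
  · intro K hK K' hK' h
    ext i
    have := congrFun h i
    by_cases h1 : i ∈ K <;> by_cases h2 : i ∈ K' <;> simp [h1, h2] at this ⊢
  · intro w hw
    simp only [mem_filter, Word, mem_univ, true_and, cube] at hw
    refine ⟨univ.filter (fun i => w i = none), ?_, ?_⟩
    · rw [Finset.mem_powersetCard_univ]
      exact hw.1
    · funext i
      by_cases h : w i = none
      · simp [h]
      · simp only [mem_filter, mem_univ, true_and, h, if_neg]
        cases hwi : w i with
        | none => exact absurd hwi h
        | some b => rw [hw.2 i b hwi]; simp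

lemma inter_card_eq_sum (n : ℕ) (A B : Finset (Fin n → Bool)) :
    (A ∩ B).card
      = ∑ x : Fin n → Bool, (if x ∈ A then 1 else 0) * (if x ∈ B then 1 else 0) := by
  have h : A ∩ B = univ.filter (fun x => x ∈ A ∧ x ∈ B) := by ext x; simp
  rw [h, Finset.card_filter]
  apply Finset.sum_congr rfl
  intro x _
  by_cases h1 : x ∈ A <;> by_cases h2 : x ∈ B <;> simp [h1, h2]

lemma count_pairs (n r : ℕ) :
    2^n * (n.choose r)^2
      ≤ 2^r * ((((Word n r) ×ˢ (Word n r)).filter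
          fun p => (cube p.1 ∩ cube p.2).Nonempty).card) := by
  have hdeg : ∀ x : Fin n → Bool,
      (∑ w ∈ Word n r, (if x ∈ cube w then 1 else 0)) = n.choose r := by
    intro x; rw [← degree n r x, Finset.card_filter]
  have key : ∑ p ∈ (Word n r) ×ˢ (Word n r), (cube p.1 ∩ cube p.2).card
      = 2^n * (n.choose r)^2 := by
    rw [Finset.sum_product]
    simp_rw [inter_card_eq_sum]
    calc ∑ w ∈ Word n r, ∑ w' ∈ Word n r, ∑ x : Fin n → Bool,
          (if x ∈ cube w then 1 else 0) * (if x ∈ cube w' then 1 else 0)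
        = ∑ w ∈ Word n r, ∑ x : Fin n → Bool,
            ((if x ∈ cube w then 1 else 0)
              * ∑ w' ∈ Word n r, (if x ∈ cube w' then 1 else 0)) := by
          refine Finset.sum_congr rfl fun w _ => ?_
          rw [Finset.sum_comm]
          exact Finset.sum_congr rfl fun x _ => (Finset.mul_sum _ _ _).symm
      _ = ∑ w ∈ Word n r, ∑ x : Fin n → Bool,
            (if x ∈ cube w then 1 else 0) * n.choose r := by simp_rw [hdeg]
      _ = ∑ x : Fin n → Bool,
            (∑ w ∈ Word n r, (if x ∈ cube w then 1 else 0)) * n.choose r := by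
          rw [Finset.sum_comm]
          exact Finset.sum_congr rfl fun x _ => (Finset.sum_mul _ _ _).symm
      _ = ∑ x : Fin n → Bool, n.choose r * n.choose r := by simp_rw [hdeg]
      _ = 2^n * (n.choose r)^2 := by
          rw [Finset.sum_const, Finset.card_univ, smul_eq_mul]
          have : Fintype.card (Fin n → Bool) = 2^n := by simp
          rw [this, sq]
  rw [← key]
  rw [← Finset.sum_filter_add_sum_filter_not ((Word n r) ×ˢ (Word n r))
    (fun p => (cube p.1 ∩ cube p.2).Nonempty)]
  have h2 : ∑ p ∈ ((Word n r) ×ˢ (Word n r)).filter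
      (fun p => ¬ (cube p.1 ∩ cube p.2).Nonempty), (cube p.1 ∩ cube p.2).card = 0 := by
    apply Finset.sum_eq_zero
    intro p hp
    simp only [mem_filter] at hp
    rw [Finset.not_nonempty_iff_eq_empty.mp hp.2]
    rfl
  rw [h2, add_zero]
  calc ∑ p ∈ ((Word n r) ×ˢ (Word n r)).filter
        (fun p => (cube p.1 ∩ cube p.2).Nonempty), (cube p.1 ∩ cube p.2).card
      ≤ ∑ _p ∈ ((Word n r) ×ˢ (Word n r)).filter
        (fun p => (cube p.1 ∩ cube p.2).Nonempty), 2^r := by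
        apply Finset.sum_le_sum
        intro p hp
        simp only [mem_filter, Finset.mem_product] at hp
        calc (cube p.1 ∩ cube p.2).card ≤ (cube p.1).card :=
              Finset.card_le_card Finset.inter_subset_left
          _ = 2^r := card_cube hp.1.1
    _ = _ := by rw [Finset.sum_const, smul_eq_mul, mul_comm]

lemma term_eq {n r : ℕ} (hrn : r + 1 ≤ n) {w w' : Fin n → Option Bool}
    (hw : w ∈ Word n r) (hw' : w' ∈ Word n r) :
    Ex n (fun S => if cube w ∪ cube w' ⊆ S then (1:ℝ) else 0)
      - Ex n (fun S => if cube w ⊆ S then (1:ℝ) else 0)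
        * Ex n (fun S => if cube w' ⊆ S then (1:ℝ) else 0)
    = 1 / 2 ^ ((cube w ∪ cube w').card) - 1 / 2 ^ (2^(r+1)) := by
  have hr2 : (2:ℕ)^r ≤ 2^n := Nat.pow_le_pow_right (by norm_num) (by omega)
  have hu : (cube w ∪ cube w').card ≤ 2^(r+1) := by
    calc (cube w ∪ cube w').card ≤ (cube w).card + (cube w').card :=
        Finset.card_union_le _ _
      _ = 2^(r+1) := by rw [card_cube hw, card_cube hw', ← two_mul, ← pow_succ']
  have hu2 : (cube w ∪ cube w').card ≤ 2^n :=
    le_trans hu (Nat.pow_le_pow_right (by norm_num) hrn)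
  rw [Ex_ind n _ hu2, Ex_ind n _ (le_trans (le_of_eq (card_cube hw)) hr2),
    Ex_ind n _ (le_trans (le_of_eq (card_cube hw')) hr2), card_cube hw, card_cube hw']
  congr 1
  rw [div_mul_div_comm, one_mul, ← pow_add, ← two_mul, ← pow_succ']

lemma nat_pow_le (n r : ℕ) (h : 2*r ≤ n) :
    n^(2*r) ≤ (2^r * r.factorial)^2 * (n.choose r)^2 := by
  have h4 : n^r ≤ 2^r * (r.factorial * n.choose r) := by
    calc n^r ≤ (2*(n-r))^r := Nat.pow_le_pow_left (by omega) r
      _ = 2^r * (n-r)^r := mul_pow _ _ _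
      _ ≤ 2^r * (n+1-r)^r := Nat.mul_le_mul_left _ (Nat.pow_le_pow_left (by omega) r)
      _ ≤ 2^r * n.descFactorial r :=
          Nat.mul_le_mul_left _ (Nat.pow_sub_le_descFactorial n r)
      _ = 2^r * (r.factorial * n.choose r) := by
          rw [Nat.descFactorial_eq_factorial_mul_choose]
  calc n^(2*r) = (n^r)^2 := by rw [← pow_mul, mul_comm]
    _ ≤ (2^r * (r.factorial * n.choose r))^2 := Nat.pow_le_pow_left h4 2
    _ = (2^r * r.factorial)^2 * (n.choose r)^2 := by ring

/-- For each fixed `r`, the variance of `X_{n,r}` is at least `c · n^(2r) · 2^n`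
for some constant `c > 0` (depending only on `r`) and all sufficiently large `n`. -/
theorem variance_lower_bound (r : ℕ) :
    ∃ c : ℝ, 0 < c ∧ ∃ N : ℕ, ∀ n ≥ N,
      Ex n (fun S => ((Xr n r S : ℝ) - Ex n (fun S' => (Xr n r S' : ℝ))) ^ 2)
        ≥ c * (n : ℝ) ^ (2 * r) * 2 ^ n := by
  refine ⟨1 / (2^(2^(r+1)) * 2^r * ((2:ℝ)^r * r.factorial)^2), by positivity,
    3*r+1, fun n hn => ?_⟩
  have hrn : r + 1 ≤ n := by omega
  have h2r : 2*r ≤ n := by omega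
  set W := Word n r with hW
  set P := (W ×ˢ W).filter (fun p => (cube p.1 ∩ cube p.2).Nonempty) with hP
  have hXr : ∀ S, ((Xr n r S : ℝ)) = ∑ w ∈ W, (if cube w ⊆ S then (1:ℝ) else 0) := by
    intro S
    rw [Xr, Finset.card_filter, Nat.cast_sum]
    apply Finset.sum_congr rfl
    intro w _
    split <;> simp
  -- variance as a sum of covariances
  have hvar : Ex n (fun S => ((Xr n r S : ℝ) - Ex n (fun S' => (Xr n r S' : ℝ))) ^ 2)
      = ∑ p ∈ W ×ˢ W,
          (Ex n (fun S => if cube p.1 ∪ cube p.2 ⊆ S then (1:ℝ) else 0)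
            - Ex n (fun S => if cube p.1 ⊆ S then (1:ℝ) else 0)
              * Ex n (fun S => if cube p.2 ⊆ S then (1:ℝ) else 0)) := by
    rw [var_eq]
    have hsq : ∀ S, ((Xr n r S : ℝ))^2
        = ∑ p ∈ W ×ˢ W, (if cube p.1 ∪ cube p.2 ⊆ S then (1:ℝ) else 0) := by
      intro S
      rw [hXr, sq, Finset.sum_mul_sum, ← Finset.sum_product']
      apply Finset.sum_congr rfl
      intro p _
      by_cases h1 : cube p.1 ⊆ S <;> by_cases h2 : cube p.2 ⊆ S <;>
        simp [h1, h2, Finset.union_subset_iff]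
    have hEX : Ex n (fun S' => (Xr n r S' : ℝ))
        = ∑ w ∈ W, Ex n (fun S => if cube w ⊆ S then (1:ℝ) else 0) := by
      simp_rw [hXr]; rw [Ex_sum]
    simp_rw [hsq]
    rw [Ex_sum, hEX, sq, Finset.sum_mul_sum, ← Finset.sum_product',
      ← Finset.sum_sub_distrib]
  rw [hvar]
  -- lower bound the sum of covariances
  have hsum_ge : (P.card : ℝ) * (1 / 2 ^ (2^(r+1)))
      ≤ ∑ p ∈ W ×ˢ W,
          (Ex n (fun S => if cube p.1 ∪ cube p.2 ⊆ S then (1:ℝ) else 0)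
            - Ex n (fun S => if cube p.1 ⊆ S then (1:ℝ) else 0)
              * Ex n (fun S => if cube p.2 ⊆ S then (1:ℝ) else 0)) := by
    rw [← Finset.sum_filter_add_sum_filter_not (W ×ˢ W)
      (fun p => (cube p.1 ∩ cube p.2).Nonempty), ← hP]
    have hA : ∀ p ∈ P, 1 / (2:ℝ) ^ (2^(r+1))
        ≤ Ex n (fun S => if cube p.1 ∪ cube p.2 ⊆ S then (1:ℝ) else 0)
            - Ex n (fun S => if cube p.1 ⊆ S then (1:ℝ) else 0)
              * Ex n (fun S => if cube p.2 ⊆ S then (1:ℝ) else 0) := by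
      intro p hp
      simp only [hP, mem_filter, Finset.mem_product] at hp
      rw [term_eq hrn hp.1.1 hp.1.2]
      have hcu : (cube p.1 ∪ cube p.2).card + 1 ≤ 2^(r+1) := by
        have h1 : 1 ≤ (cube p.1 ∩ cube p.2).card := Finset.Nonempty.card_pos hp.2
        have h2 : (cube p.1 ∪ cube p.2).card + (cube p.1 ∩ cube p.2).card
            = (cube p.1).card + (cube p.2).card :=
          Finset.card_union_add_card_inter _ _
        rw [card_cube hp.1.1, card_cube hp.1.2] at h2
        have : (2:ℕ)^r + 2^r = 2^(r+1) := by rw [← two_mul, ← pow_succ']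
        omega
      set u := (cube p.1 ∪ cube p.2).card
      have hpow : (2:ℝ)^(u+1) ≤ 2^(2^(r+1)) :=
        pow_le_pow_right₀ one_le_two hcu
      rw [pow_succ] at hpow
      have h1 : (0:ℝ) < 2^u := by positivity
      have h2 : (0:ℝ) < 2^(2^(r+1)) := by positivity
      rw [le_sub_iff_add_le, ← add_div, div_le_div_iff₀ h2 h1]
      nlinarith
    have hB : ∀ p ∈ (W ×ˢ W).filter (fun p => ¬ (cube p.1 ∩ cube p.2).Nonempty),
        (0:ℝ) ≤ Ex n (fun S => if cube p.1 ∪ cube p.2 ⊆ S then (1:ℝ) else 0)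
            - Ex n (fun S => if cube p.1 ⊆ S then (1:ℝ) else 0)
              * Ex n (fun S => if cube p.2 ⊆ S then (1:ℝ) else 0) := by
      intro p hp
      simp only [mem_filter, Finset.mem_product] at hp
      rw [term_eq hrn hp.1.1 hp.1.2, sub_nonneg]
      apply one_div_le_one_div_of_le (by positivity)
      apply pow_le_pow_right₀ one_le_two
      calc (cube p.1 ∪ cube p.2).card ≤ (cube p.1).card + (cube p.2).card :=
          Finset.card_union_le _ _
        _ = 2^(r+1) := by rw [card_cube hp.1.1, card_cube hp.1.2, ← two_mul, ← pow_succ']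
    have l1 : (P.card : ℝ) * (1 / 2 ^ (2^(r+1)))
        ≤ ∑ p ∈ P, (Ex n (fun S => if cube p.1 ∪ cube p.2 ⊆ S then (1:ℝ) else 0)
            - Ex n (fun S => if cube p.1 ⊆ S then (1:ℝ) else 0)
              * Ex n (fun S => if cube p.2 ⊆ S then (1:ℝ) else 0)) := by
      have := Finset.card_nsmul_le_sum P _ _ hA
      rwa [nsmul_eq_mul] at this
    have l2 : (0:ℝ) ≤ ∑ p ∈ (W ×ˢ W).filter (fun p => ¬ (cube p.1 ∩ cube p.2).Nonempty),
        (Ex n (fun S => if cube p.1 ∪ cube p.2 ⊆ S then (1:ℝ) else 0)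
            - Ex n (fun S => if cube p.1 ⊆ S then (1:ℝ) else 0)
              * Ex n (fun S => if cube p.2 ⊆ S then (1:ℝ) else 0)) :=
      Finset.sum_nonneg hB
    linarith
  refine le_trans ?_ hsum_ge
  -- final arithmetic
  have hcount : 2^n * (n.choose r)^2 ≤ 2^r * P.card := count_pairs n r
  have hpow : n^(2*r) ≤ (2^r * r.factorial)^2 * (n.choose r)^2 := nat_pow_le n r h2r
  have hnat : n^(2*r) * 2^n ≤ (2^r * r.factorial)^2 * (2^r * P.card) := by
    calc n^(2*r) * 2^n ≤ ((2^r * r.factorial)^2 * (n.choose r)^2) * 2^n :=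
        Nat.mul_le_mul_right _ hpow
      _ = (2^r * r.factorial)^2 * (2^n * (n.choose r)^2) := by ring
      _ ≤ (2^r * r.factorial)^2 * (2^r * P.card) := Nat.mul_le_mul_left _ hcount
  have hnatR : ((n:ℝ)^(2*r) * 2^n) ≤ ((2:ℝ)^r * r.factorial)^2 * (2^r * P.card) := by
    exact_mod_cast hnat
  have hF : (0:ℝ) < ((2:ℝ)^r * r.factorial)^2 := by positivity
  rw [ge_iff_le] at *
  have e1 : 1 / (2^(2^(r+1)) * 2^r * ((2:ℝ)^r * r.factorial)^2) * (n : ℝ) ^ (2 * r) * 2 ^ n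
      = ((n:ℝ)^(2*r) * 2^n) / (2^(2^(r+1)) * 2^r * ((2:ℝ)^r * r.factorial)^2) := by
    ring
  have e2 : (P.card : ℝ) * (1 / 2 ^ (2^(r+1))) = (P.card : ℝ) / 2 ^ (2^(r+1)) := by ring
  rw [e1, e2, div_le_div_iff₀ (by positivity) (by positivity)]
  calc (n:ℝ)^(2*r) * 2^n * 2^(2^(r+1))
      ≤ (((2:ℝ)^r * r.factorial)^2 * (2^r * P.card)) * 2^(2^(r+1)) := by
        apply mul_le_mul_of_nonneg_right hnatR (by positivity)
    _ = (P.card : ℝ) * (2^(2^(r+1)) * 2^r * ((2:ℝ)^r * r.factorial)^2) := by ring
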